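/- For the uniform, exponential time decay, and U-shaped attribution rules, the user × publisher × advertiser adjacency relation with post-attribution contribution bound enforcement is invalid: for each of these rules and every constant C₀ > 0 there exist adjacent datasets with contribution bound r = 1 whose attributed datasets are at ℓ1-distance greater than C₀. -/

import Mathlib

/-! Framework for differentially private ad conversion measurement
(Delaney et al., "Differentially Private Ad Conversion Measurement"). -/

structure Impression where
  time : ℕ
  user : ℕ
  pub : ℕ
  adv : ℕ
  id : ℕ
deriving DecidableEq

structure Conversion where
  time : ℕ
  user : ℕ
  adv : ℕ
  id : ℕ
deriving DecidableEq

structure Dataset where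
  imps : List Impression
  convs : List Conversion

/-- An attribution rule maps a time-ordered list of impressions and a conversion
to a list of credits (one per impression). -/
abbrev AttrRule := List Impression → Conversion → List ℝ

/-- A valid attribution rule outputs one nonnegative weight per impression, summing to 1. -/
def ValidRule (a : AttrRule) : Prop :=
  ∀ is c, is ≠ [] →
    (a is c).length = is.length ∧ (a is c).sum = 1 ∧ ∀ w ∈ a is c, (0 : ℝ) ≤ w

/-- Impressions eligible for attribution of conversion `c`: those occurring earlier
with the same user and advertiser. -/
def eligible (D : Dataset) (c : Conversion) : List Impression :=
  D.imps.filter fun i => decide (i.time < c.time ∧ i.user = c.user ∧ i.adv = c.adv)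

/-- ℓ₁ distance between attributed datasets. -/
noncomputable def l1dist (w w' : (Impression × Conversion) →₀ ℝ) : ℝ :=
  (w - w').sum fun _ v => |v|

/-- Impressions and conversions are listed in time order. -/
def SortedDS (D : Dataset) : Prop :=
  D.imps.Pairwise (fun i j => i.time ≤ j.time) ∧
  D.convs.Pairwise (fun c c' => c.time ≤ c'.time)

/-- Inner loop of post-attribution contribution-bound enforcement: each weighted
(impression, conversion) pair is kept only if the remaining bound of its scope covers
the weight, in which case the weight is deducted. -/
noncomputable def applyPairs {σ : Type} [DecidableEq σ] (s : Impression → σ) (c : Conversion) :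
    List (Impression × ℝ) → (σ → ℝ) × ((Impression × Conversion) →₀ ℝ) →
      (σ → ℝ) × ((Impression × Conversion) →₀ ℝ)
  | [], st => st
  | (i, w) :: rest, st =>
      if w ≤ st.1 (s i) then
        applyPairs s c rest
          (Function.update st.1 (s i) (st.1 (s i) - w), st.2 + Finsupp.single (i, c) w)
      else
        applyPairs s c rest st

/-- Attribution with post-attribution contribution bound enforcement (Algorithm 1),
with contribution bounding scope map `s` and contribution bound `r`. -/
noncomputable def postAttr {σ : Type} [DecidableEq σ] (a : AttrRule) (s : Impression → σ)
    (r : ℝ) (D : Dataset) : (Impression × Conversion) →₀ ℝ :=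
  (D.convs.foldl
    (fun st c => applyPairs s c ((eligible D c).zip (a (eligible D c) c)) st)
    ((fun _ => r : σ → ℝ), (0 : (Impression × Conversion) →₀ ℝ))).2

/-- Attribution with pre-attribution contribution bound enforcement (Algorithm 2):
for each conversion, every scope with an eligible impression pays one unit of its bound
if available, otherwise its impressions are excluded from attribution. -/
noncomputable def preAttr {σ : Type} [DecidableEq σ] (a : AttrRule) (s : Impression → σ)
    (r : ℝ) (D : Dataset) : (Impression × Conversion) →₀ ℝ :=
  (D.convs.foldl
    (fun (st : (σ → ℝ) × ((Impression × Conversion) →₀ ℝ)) c =>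
      let el := eligible D c
      let surv := el.filter fun i => decide ((1 : ℝ) ≤ st.1 (s i))
      let scopes := (el.map s).dedup
      ((fun x => if x ∈ scopes ∧ (1 : ℝ) ≤ st.1 x then st.1 x - 1 else st.1 x : σ → ℝ),
        st.2 + ((surv.zip (a surv c)).map fun p => Finsupp.single (p.1, c) p.2).sum))
    ((fun _ => r : σ → ℝ), (0 : (Impression × Conversion) →₀ ℝ))).2

/-- Attribution without any contribution bound enforcement. -/
noncomputable def attrNoCap (a : AttrRule) (D : Dataset) :
    (Impression × Conversion) →₀ ℝ :=
  (D.convs.map fun c =>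
    (((eligible D c).zip (a (eligible D c) c)).map fun p => Finsupp.single (p.1, c) p.2).sum).sum

/-- Adjacency: `D'` results from `D` by adding a single impression (in time order). -/
def AddOneImpression (D D' : Dataset) : Prop :=
  ∃ (i0 : Impression) (l₁ l₂ : List Impression),
    D.imps = l₁ ++ l₂ ∧ D'.imps = l₁ ++ i0 :: l₂ ∧ D.convs = D'.convs

/-- Adjacency: `D` results from `D'` by removing all impressions whose scope (under `si`)
is `v` and all conversions whose scope (under `sc`) is `v`. -/
def RemovesScope {σ : Type} [DecidableEq σ] (si : Impression → σ)
    (sc : Conversion → Option σ) (v : σ) (D D' : Dataset) : Prop :=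
  D.imps = D'.imps.filter (fun i => decide (si i ≠ v)) ∧
  D.convs = D'.convs.filter (fun c => decide (sc c ≠ some v))

/-- First-touch attribution. -/
noncomputable def FTA : AttrRule := fun is _ =>
  match is with
  | [] => []
  | _ :: t => 1 :: t.map fun _ => 0

/-- Last-touch attribution. -/
noncomputable def LTA : AttrRule := fun is _ =>
  match is with
  | [] => []
  | _ :: _ => List.replicate (is.length - 1) 0 ++ [1]

/-- Uniform multi-touch attribution. -/
noncomputable def UNI : AttrRule := fun is _ => is.map fun _ => ((is.length : ℝ))⁻¹

/-- U-shaped attribution. -/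
noncomputable def USH : AttrRule := fun is _ =>
  match is with
  | [] => []
  | [_] => [1]
  | [_, _] => [0.5, 0.5]
  | _ :: _ :: _ :: _ =>
      (0.4 : ℝ) :: (List.replicate (is.length - 2) ((0.2 : ℝ) / ((is.length : ℝ) - 2)) ++ [0.4])

/-- Exponential time decay attribution with half-life `th`. -/
noncomputable def EXPR (th : ℝ) : AttrRule := fun is c =>
  let wt : Impression → ℝ := fun i => (2 : ℝ) ^ (-(((c.time : ℝ) - (i.time : ℝ)) / th))
  is.map fun i => wt i / (is.map wt).sum

section AuxCorA11

def sfun : Impression → ℕ × ℕ × ℕ := fun i => (i.user, i.pub, i.adv)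

def Xi (j : ℕ) : Impression := ⟨2, 0, j, 0, 0⟩

def Ci (i : ℕ) : Conversion := ⟨4, 0, 0, i⟩

def TrS (a k : ℕ) (t : ℕ × ℕ × ℕ) : Prop :=
  t.1 = 0 ∧ t.2.2 = 0 ∧ a ≤ t.2.1 ∧ t.2.1 < a + k

lemma sfun_Xi (j : ℕ) : sfun (Xi j) = (0, j, 0) := rfl

lemma trS_Xi {a k j : ℕ} (h : j < k) : TrS a k (sfun (Xi (a + j))) :=
  ⟨rfl, rfl, Nat.le_add_right _ _, by show a + j < a + k; omega⟩

lemma zip_self_map (l : List Impression) (f : Impression → ℝ) :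
    l.zip (l.map f) = l.map fun x => (x, f x) := by
  induction l with
  | nil => rfl
  | cons x l ih => simp [ih]

lemma zip_replicate (l : List Impression) (b : ℝ) :
    l.zip (List.replicate l.length b) = l.map fun x => (x, b) := by
  induction l with
  | nil => rfl
  | cons x l ih => simp [List.replicate_succ, ih]

lemma applyPairs_append {σ : Type} [DecidableEq σ] (s : Impression → σ) (c : Conversion)
    (L₁ L₂ : List (Impression × ℝ)) (st) :
    applyPairs s c (L₁ ++ L₂) st = applyPairs s c L₂ (applyPairs s c L₁ st) := by
  induction L₁ generalizing st with
  | nil => simp [applyPairs]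
  | cons p L ih =>
    obtain ⟨i, w⟩ := p
    simp only [List.cons_append, applyPairs]
    split <;> exact ih _

end AuxCorA11
section AuxCorA11b

lemma applyPairs_junk {a k : ℕ} (c : Conversion) (L : List (Impression × ℝ))
    (hL : ∀ p ∈ L, ¬ TrS a k (sfun p.1)) (β : ℕ × ℕ × ℕ → ℝ)
    (F : (Impression × Conversion) →₀ ℝ) :
    ∃ β' G, applyPairs sfun c L (β, F) = (β', F + G) ∧
      (∀ t, TrS a k t → β' t = β t) ∧
      (∀ pr : Impression × Conversion, TrS a k (sfun pr.1) → G pr = 0) := by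
  induction L generalizing β F with
  | nil => exact ⟨β, 0, by simp [applyPairs], fun t _ => rfl, fun pr _ => rfl⟩
  | cons p L ih =>
    obtain ⟨i, w⟩ := p
    have hi : ¬ TrS a k (sfun i) := hL (i, w) (by simp)
    have hL' : ∀ p ∈ L, ¬ TrS a k (sfun p.1) := fun p hp => hL p (by simp [hp])
    by_cases hacc : w ≤ β (sfun i)
    · obtain ⟨β', G, hEq, hβ, hG⟩ := ih hL'
        (Function.update β (sfun i) (β (sfun i) - w)) (F + Finsupp.single (i, c) w)
      refine ⟨β', Finsupp.single (i, c) w + G, ?_, ?_, ?_⟩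
      · simp only [applyPairs, hacc, if_pos]
        rw [hEq, add_assoc]
      · intro t ht
        rw [hβ t ht, Function.update_of_ne (fun h => hi (by rw [← h]; exact ht))]
      · intro pr hpr
        have hne : (i, c) ≠ pr := by
          intro h
          apply hi
          rw [show sfun i = sfun pr.1 by rw [← h]]
          exact hpr
        rw [Finsupp.add_apply, Finsupp.single_eq_of_ne' hne, hG pr hpr, add_zero]
    · obtain ⟨β', G, hEq, hβ, hG⟩ := ih hL' β F
      exact ⟨β', G, by simp only [applyPairs, hacc, if_neg, not_false_iff]; exact hEq, hβ, hG⟩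

lemma applyPairs_tracked {a : ℕ} (k : ℕ) (c : Conversion) (w : ℝ) (β : ℕ × ℕ × ℕ → ℝ)
    (F : (Impression × Conversion) →₀ ℝ)
    (hacc : ∀ j, j < k → w ≤ β (0, a + j, 0)) :
    ∃ β', applyPairs sfun c ((List.range k).map fun j => (Xi (a + j), w)) (β, F)
        = (β', F + ∑ j ∈ Finset.range k, Finsupp.single (Xi (a + j), c) w) ∧
      (∀ t, ¬ TrS a k t → β' t = β t) ∧
      (∀ j, j < k → β' (0, a + j, 0) = β (0, a + j, 0) - w) := by
  induction k with
  | zero => exact ⟨β, by simp [applyPairs], fun t _ => rfl, fun j hj => absurd hj (by omega)⟩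
  | succ k ih =>
    obtain ⟨β', hEq, hout, hin⟩ := ih (fun j hj => hacc j (Nat.lt_succ_of_lt hj))
    have hβ'k : β' (0, a + k, 0) = β (0, a + k, 0) := hout _ (by simp [TrS])
    have hacck : w ≤ β' (0, a + k, 0) := hβ'k ▸ hacc k (Nat.lt_succ_self k)
    refine ⟨Function.update β' (0, a + k, 0) (β' (0, a + k, 0) - w), ?_, ?_, ?_⟩
    · rw [List.range_succ, List.map_append, applyPairs_append, hEq]
      simp only [List.map_cons, List.map_nil, applyPairs, sfun_Xi, hacck, if_pos]
      rw [Finset.sum_range_succ, ← add_assoc]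
    · intro t ht
      have ht' : ¬ TrS a k t := fun h => ht ⟨h.1, h.2.1, h.2.2.1, by have := h.2.2.2; omega⟩
      have htne : t ≠ (0, a + k, 0) := by
        rintro rfl; exact ht ⟨rfl, rfl, Nat.le_add_right _ _, by show a + k < a + (k+1); omega⟩
      rw [Function.update_of_ne htne, hout t ht']
    · intro j hj
      rcases Nat.lt_succ_iff_lt_or_eq.1 hj with hj' | rfl
      · rw [Function.update_of_ne (by simp [Prod.ext_iff]; omega), hin j hj']
      · rw [Function.update_self, hβ'k]

end AuxCorA11b
section AuxCorA11c

lemma Xi_inj {j j' : ℕ} (h : Xi j = Xi j') : j = j' := congrArg Impression.pub h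

lemma Ci_inj {i i' : ℕ} (h : Ci i = Ci i') : i = i' := congrArg Conversion.id h

lemma E_apply {a k N : ℕ} {w : ℝ} {j i : ℕ} (hj : j < k) (hi : i < N) :
    (∑ i' ∈ Finset.range N, ∑ j' ∈ Finset.range k,
        Finsupp.single (Xi (a + j'), Ci i') w) (Xi (a + j), Ci i) = w := by
  rw [Finsupp.finset_sum_apply]
  rw [Finset.sum_eq_single_of_mem i (Finset.mem_range.2 hi)]
  · rw [Finsupp.finset_sum_apply]
    rw [Finset.sum_eq_single_of_mem j (Finset.mem_range.2 hj)]
    · exact Finsupp.single_eq_same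
    · intro j' _ hne
      refine Finsupp.single_eq_of_ne ?_
      intro h
      have := Xi_inj (congrArg Prod.fst h)
      omega
  · intro i' _ hne
    rw [Finsupp.finset_sum_apply]
    refine Finset.sum_eq_zero fun j' _ => Finsupp.single_eq_of_ne ?_
    intro h
    exact hne (Ci_inj (congrArg Prod.snd h).symm)

lemma le_l1dist (w w' : (Impression × Conversion) →₀ ℝ) (S : Finset (Impression × Conversion)) :
    ∑ p ∈ S, |w p - w' p| ≤ l1dist w w' := by
  classical
  rw [l1dist, Finsupp.sum]
  have h1 : ∑ p ∈ S, |w p - w' p| = ∑ p ∈ S, |(w - w') p| := by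
    refine Finset.sum_congr rfl fun p _ => ?_
    rw [Finsupp.sub_apply]
  rw [h1]
  calc ∑ p ∈ S, |(w - w') p|
      ≤ ∑ p ∈ S ∪ (w - w').support, |(w - w') p| :=
        Finset.sum_le_sum_of_subset_of_nonneg Finset.subset_union_left
          (fun _ _ _ => abs_nonneg _)
    _ = ∑ p ∈ (w - w').support, |(w - w') p| := by
        refine (Finset.sum_subset Finset.subset_union_right fun x _ hx => ?_).symm
        rw [Finsupp.notMem_support_iff.1 hx, abs_zero]

end AuxCorA11c
section AuxCorA11d

lemma postAttr_master (rule : AttrRule) (D : Dataset) (a k N : ℕ) (w : ℝ)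
    (hconvs : D.convs = (List.range N).map Ci)
    (hw : 0 ≤ w) (hNw : (N : ℝ) * w ≤ 1)
    (hL : ∀ i, i < N → ∃ J₁ J₂ : List (Impression × ℝ),
      (∀ p ∈ J₁, ¬ TrS a k (sfun p.1)) ∧ (∀ p ∈ J₂, ¬ TrS a k (sfun p.1)) ∧
      (eligible D (Ci i)).zip (rule (eligible D (Ci i)) (Ci i)) =
        J₁ ++ (((List.range k).map fun j => (Xi (a + j), w)) ++ J₂)) :
    ∀ j, j < k → ∀ i, i < N →
      postAttr rule sfun 1 D (Xi (a + j), Ci i) = w := by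
  have key : ∀ n, n ≤ N → ∃ β G,
      (List.foldl
        (fun st c => applyPairs sfun c ((eligible D c).zip (rule (eligible D c) c)) st)
        ((fun _ => (1 : ℝ)), (0 : (Impression × Conversion) →₀ ℝ)) ((List.range n).map Ci))
      = (β, (∑ i' ∈ Finset.range n, ∑ j' ∈ Finset.range k,
          Finsupp.single (Xi (a + j'), Ci i') w) + G) ∧
      (∀ j, j < k → β (0, a + j, 0) = 1 - n * w) ∧
      (∀ pr : Impression × Conversion, TrS a k (sfun pr.1) → G pr = 0) := by
    intro n
    induction n with
    | zero => exact fun _ => ⟨(fun _ => 1), 0, by simp, by simp, by simp⟩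
    | succ n ih =>
      intro hn
      obtain ⟨β, G, h1, h2, h3⟩ := ih (Nat.le_of_succ_le hn)
      obtain ⟨J₁, J₂, hJ₁, hJ₂, hzip⟩ := hL n hn
      rw [List.range_succ, List.map_append, List.foldl_append, h1]
      simp only [List.map_cons, List.map_nil, List.foldl_cons, List.foldl_nil]
      rw [hzip, applyPairs_append, applyPairs_append]
      obtain ⟨β₁, G₁, e1, b1, g1⟩ := applyPairs_junk (Ci n) J₁ hJ₁ β _
      rw [e1]
      have hacc : ∀ j, j < k → w ≤ β₁ (0, a + j, 0) := by
        intro j hj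
        rw [b1 _ ⟨rfl, rfl, Nat.le_add_right _ _, by show a + j < a + k; omega⟩, h2 j hj]
        have hcast : (n : ℝ) + 1 ≤ (N : ℝ) := by exact_mod_cast hn
        nlinarith
      obtain ⟨β₂, e2, bout2, bin2⟩ := applyPairs_tracked k (Ci n) w β₁ _ hacc
      rw [e2]
      obtain ⟨β₃, G₂, e3, b3, g3⟩ := applyPairs_junk (Ci n) J₂ hJ₂ β₂ _
      rw [e3]
      refine ⟨β₃, G + G₁ + G₂, ?_, ?_, ?_⟩
      · congr 1
        rw [Finset.sum_range_succ]
        abel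
      · intro j hj
        rw [b3 _ ⟨rfl, rfl, Nat.le_add_right _ _, by show a + j < a + k; omega⟩, bin2 j hj,
          b1 _ ⟨rfl, rfl, Nat.le_add_right _ _, by show a + j < a + k; omega⟩, h2 j hj]
        push_cast
        ring
      · intro pr hpr
        rw [Finsupp.add_apply, Finsupp.add_apply, h3 pr hpr, g1 pr hpr, g3 pr hpr]
        ring
  intro j hj i hi
  obtain ⟨β, G, h1, _, h3⟩ := key N le_rfl
  unfold postAttr
  rw [hconvs, h1]
  rw [Finsupp.add_apply, h3 _ (trS_Xi hj), add_zero]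
  exact E_apply hj hi

end AuxCorA11d
section AuxCorA11e

lemma l1dist_lower (F F' : (Impression × Conversion) →₀ ℝ) (a k N : ℕ) (w w' : ℝ)
    (hF : ∀ j, j < k → ∀ i, i < N → F (Xi (a + j), Ci i) = w)
    (hF' : ∀ j, j < k → ∀ i, i < N → F' (Xi (a + j), Ci i) = w') :
    (k : ℝ) * N * |w - w'| ≤ l1dist F F' := by
  classical
  have hinj : Set.InjOn (fun pr : ℕ × ℕ => (Xi (a + pr.1), Ci pr.2))
      ↑(Finset.range k ×ˢ Finset.range N) := by
    intro p _ q _ h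
    have h1 := Xi_inj (congrArg Prod.fst h)
    have h2 := Ci_inj (congrArg Prod.snd h)
    exact Prod.ext (by omega) h2
  have := le_l1dist F F'
    ((Finset.range k ×ˢ Finset.range N).image (fun pr : ℕ × ℕ => (Xi (a + pr.1), Ci pr.2)))
  rw [Finset.sum_image (fun p hp q hq h => hinj hp hq h)] at this
  calc (k : ℝ) * N * |w - w'|
      = ∑ _p ∈ Finset.range k ×ˢ Finset.range N, |w - w'| := by
        rw [Finset.sum_const, Finset.card_product, Finset.card_range, Finset.card_range,
          nsmul_eq_mul]
        push_cast
        ring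
    _ = ∑ p ∈ Finset.range k ×ˢ Finset.range N,
          |F (Xi (a + p.1), Ci p.2) - F' (Xi (a + p.1), Ci p.2)| := by
        refine Finset.sum_congr rfl fun p hp => ?_
        obtain ⟨hp1, hp2⟩ := Finset.mem_product.1 hp
        rw [hF p.1 (Finset.mem_range.1 hp1) p.2 (Finset.mem_range.1 hp2),
          hF' p.1 (Finset.mem_range.1 hp1) p.2 (Finset.mem_range.1 hp2)]
    _ ≤ l1dist F F' := this

lemma eligible_all (D : Dataset)
    (h : ∀ i ∈ D.imps, i.time < 4 ∧ i.user = 0 ∧ i.adv = 0) (i : ℕ) :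
    eligible D (Ci i) = D.imps := by
  rw [eligible]
  refine List.filter_eq_self.2 fun x hx => ?_
  obtain ⟨h1, h2, h3⟩ := h x hx
  simp [Ci, h1, h2, h3]

end AuxCorA11e
section AuxCorA11f

def v0 : Impression := ⟨1, 0, 0, 0, 0⟩

def XimpsL (m : ℕ) : List Impression := (List.range m).map fun j => Xi (1 + j)

def convsL (N : ℕ) : List Conversion := (List.range N).map Ci

lemma mem_XimpsL {m : ℕ} {x : Impression} (hx : x ∈ XimpsL m) :
    ∃ j, j < m ∧ x = Xi (1 + j) := by
  obtain ⟨j, hj, rfl⟩ := List.mem_map.1 hx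
  exact ⟨j, List.mem_range.1 hj, rfl⟩

lemma convs_filter (N : ℕ) (v : ℕ × ℕ × ℕ) :
    convsL N = (convsL N).filter
      (fun c => decide ((fun _ : Conversion => (none : Option (ℕ × ℕ × ℕ))) c ≠ some v)) := by
  refine (List.filter_eq_self.2 fun x _ => ?_).symm
  simp

lemma pairwise_const_time {α : Type} (l : List α) (f : α → ℕ) (T : ℕ)
    (h : ∀ x ∈ l, f x = T) : l.Pairwise (fun a b => f a ≤ f b) := by
  induction l with
  | nil => exact List.Pairwise.nil
  | cons x l ih =>
    refine List.Pairwise.cons (fun y hy => ?_) (ih fun y hy => h y (List.mem_cons_of_mem x hy))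
    rw [h x (List.mem_cons_self), h y (List.mem_cons_of_mem x hy)]

lemma sorted_convsL (N : ℕ) : (convsL N).Pairwise (fun c c' => c.time ≤ c'.time) :=
  pairwise_const_time (convsL N) (fun c => Conversion.time c) 4 (by
    intro x hx
    obtain ⟨i, _, rfl⟩ := List.mem_map.1 hx
    rfl)

end AuxCorA11f
section AuxCorA11g

lemma filter_scope_XimpsL (m : ℕ) :
    (XimpsL m).filter
      (fun i => decide ((fun i : Impression => (i.user, i.pub, i.adv)) i ≠ ((0, 0, 0) : ℕ × ℕ × ℕ)))
      = XimpsL m := by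
  refine List.filter_eq_self.2 fun x hx => ?_
  obtain ⟨j, _, rfl⟩ := mem_XimpsL hx
  simp [Xi]

lemma filter_scope_v0 (q : ℕ) :
    (List.replicate q v0).filter
      (fun i => decide ((fun i : Impression => (i.user, i.pub, i.adv)) i ≠ ((0, 0, 0) : ℕ × ℕ × ℕ)))
      = [] := by
  rw [List.filter_replicate]
  simp [v0]

lemma uni_weights (l : List Impression) (c : Conversion) :
    UNI l c = l.map fun _ => ((l.length : ℝ))⁻¹ := rfl

lemma len_XimpsL (m : ℕ) : (XimpsL m).length = m := by
  rw [XimpsL, List.length_map, List.length_range]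

lemma sorted_imps_uni (m q : ℕ) :
    (List.replicate q v0 ++ XimpsL m).Pairwise (fun i j => i.time ≤ j.time) := by
  rw [List.pairwise_append]
  refine ⟨pairwise_const_time _ (fun i => Impression.time i) 1
      (fun x hx => by rw [List.eq_of_mem_replicate hx]; rfl),
    pairwise_const_time _ (fun i => Impression.time i) 2
      (fun x hx => by obtain ⟨j, _, rfl⟩ := mem_XimpsL hx; rfl), ?_⟩
  intro x hx y hy
  rw [List.eq_of_mem_replicate hx]
  obtain ⟨j, _, rfl⟩ := mem_XimpsL hy
  show (1 : ℕ) ≤ 2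
  omega

lemma eligible_uni (m q : ℕ) (i : ℕ) :
    eligible ⟨List.replicate q v0 ++ XimpsL m, convsL m⟩ (Ci i)
      = List.replicate q v0 ++ XimpsL m := by
  refine eligible_all _ (fun x hx => ?_) i
  rcases List.mem_append.1 hx with hx | hx
  · rw [List.eq_of_mem_replicate hx]
    exact ⟨by norm_num [v0], rfl, rfl⟩
  · obtain ⟨j, _, rfl⟩ := mem_XimpsL hx
    exact ⟨by norm_num [Xi], rfl, rfl⟩

lemma v0_not_tracked (k : ℕ) : ¬ TrS 1 k (sfun v0) := by
  rintro ⟨-, -, h, -⟩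
  exact absurd h (by norm_num [v0, sfun])

lemma uni_master (m q : ℕ) (hm1 : 1 ≤ m) :
    ∀ j, j < m → ∀ i, i < m →
      postAttr UNI sfun 1 ⟨List.replicate q v0 ++ XimpsL m, convsL m⟩ (Xi (1 + j), Ci i)
        = (((q + m : ℕ) : ℝ))⁻¹ := by
  have hqm : (0:ℝ) < ((q + m : ℕ) : ℝ) := by
    have : 0 < q + m := by omega
    exact_mod_cast this
  refine postAttr_master UNI _ 1 m m _ rfl (by positivity) ?_ ?_
  · rw [← div_eq_mul_inv, div_le_one hqm]
    have : m ≤ q + m := by omega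
    exact_mod_cast this
  · intro i him
    refine ⟨List.replicate q (v0, (((q + m : ℕ) : ℝ))⁻¹), [], ?_, by simp, ?_⟩
    · intro p hp
      rw [List.eq_of_mem_replicate hp]
      exact v0_not_tracked m
    · rw [eligible_uni, uni_weights, zip_self_map]
      have hlen : (List.replicate q v0 ++ XimpsL m).length = q + m := by
        rw [List.length_append, List.length_replicate, len_XimpsL]
      rw [hlen]
      simp [XimpsL, List.map_append, List.map_replicate, List.map_map, Function.comp]

lemma uni_invalid : ∀ C₀ : ℝ, 0 < C₀ → ∃ (D D' : Dataset) (v : ℕ × ℕ × ℕ),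
    RemovesScope (fun i => (i.user, i.pub, i.adv)) (fun _ => none) v D D' ∧ SortedDS D' ∧
    C₀ < l1dist (postAttr UNI (fun i => (i.user, i.pub, i.adv)) 1 D)
      (postAttr UNI (fun i => (i.user, i.pub, i.adv)) 1 D') := by
  intro C₀ hC₀
  obtain ⟨m, hm1, hmC⟩ : ∃ m : ℕ, 1 ≤ m ∧ 2 * C₀ < (m : ℝ) :=
    ⟨⌈2 * C₀⌉₊ + 1, Nat.le_add_left 1 _, by
      calc 2 * C₀ ≤ (⌈2 * C₀⌉₊ : ℝ) := Nat.le_ceil _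
        _ < _ := by exact_mod_cast Nat.lt_succ_self _⟩
  have hmR : (0 : ℝ) < (m : ℝ) := by
    have : 0 < m := hm1
    exact_mod_cast this
  refine ⟨⟨XimpsL m, convsL m⟩, ⟨List.replicate m v0 ++ XimpsL m, convsL m⟩, (0, 0, 0),
    ⟨?_, convs_filter m _⟩, ⟨sorted_imps_uni m m, sorted_convsL m⟩, ?_⟩
  · show XimpsL m = _
    rw [List.filter_append, filter_scope_v0, filter_scope_XimpsL, List.nil_append]
  · have hF : ∀ j, j < m → ∀ i, i < m →
        postAttr UNI sfun 1 ⟨XimpsL m, convsL m⟩ (Xi (1 + j), Ci i) = (((0 + m : ℕ) : ℝ))⁻¹ := by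
      have := uni_master m 0 hm1
      simpa using this
    have hF' := uni_master m m hm1
    have hdist := l1dist_lower _ _ 1 m m _ _ hF hF'
    refine lt_of_lt_of_le ?_ hdist
    have e1 : (((0 + m : ℕ) : ℝ))⁻¹ - (((m + m : ℕ) : ℝ))⁻¹ = (2 * (m:ℝ))⁻¹ := by
      push_cast
      rw [zero_add]
      field_simp
      ring
    rw [e1, abs_of_pos (by positivity)]
    rw [show (m : ℝ) * (m : ℝ) * (2 * (m:ℝ))⁻¹ = (m : ℝ) / 2 from by field_simp]
    linarith

end AuxCorA11g
section AuxCorA11h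

def vl : Impression := ⟨3, 0, 0, 0, 0⟩

def UimpsD (k : ℕ) : List Impression :=
  Xi 1 :: ((List.range k).map (fun j => Xi (2 + j)) ++ [Xi (k + 2)])

lemma mem_UimpsD {k : ℕ} {x : Impression} (hx : x ∈ UimpsD k) :
    ∃ j, 1 ≤ j ∧ j ≤ k + 2 ∧ x = Xi j := by
  rcases List.mem_cons.1 hx with rfl | hx
  · exact ⟨1, le_refl _, by omega, rfl⟩
  · rcases List.mem_append.1 hx with hx | hx
    · obtain ⟨j, hj, rfl⟩ := List.mem_map.1 hx
      exact ⟨2 + j, by omega, by have := List.mem_range.1 hj; omega, rfl⟩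
    · rw [List.mem_singleton.1 hx]
      exact ⟨k + 2, by omega, le_refl _, rfl⟩

lemma len_UimpsD (k : ℕ) : (UimpsD k).length = k + 2 := by
  rw [UimpsD]
  simp

lemma ush_eq (l : List Impression) (c : Conversion) (h : 3 ≤ l.length) :
    USH l c = (0.4 : ℝ) ::
      (List.replicate (l.length - 2) ((0.2 : ℝ) / ((l.length : ℝ) - 2)) ++ [(0.4 : ℝ)]) := by
  match l with
  | [] => simp at h
  | [a] => simp at h
  | [a, b] => simp at h
  | a :: b :: d :: t => rfl

lemma filter_scope_UimpsD (k : ℕ) :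
    (UimpsD k).filter
      (fun i => decide ((fun i : Impression => (i.user, i.pub, i.adv)) i ≠ ((0, 0, 0) : ℕ × ℕ × ℕ)))
      = UimpsD k := by
  refine List.filter_eq_self.2 fun x hx => ?_
  obtain ⟨j, hj1, _, rfl⟩ := mem_UimpsD hx
  simp [Xi]
  omega

lemma filter_scope_vl :
    ([vl]).filter
      (fun i => decide ((fun i : Impression => (i.user, i.pub, i.adv)) i ≠ ((0, 0, 0) : ℕ × ℕ × ℕ)))
      = [] := by
  simp [vl]

def ushImpsD' (k : ℕ) : List Impression :=
  List.replicate (k + 1) v0 ++ (UimpsD k ++ [vl])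

lemma sorted_imps_ush (k : ℕ) :
    (ushImpsD' k).Pairwise (fun i j => i.time ≤ j.time) := by
  rw [ushImpsD', List.pairwise_append]
  refine ⟨pairwise_const_time _ (fun i => Impression.time i) 1
      (fun x hx => by rw [List.eq_of_mem_replicate hx]; rfl), ?_, ?_⟩
  · rw [List.pairwise_append]
    refine ⟨pairwise_const_time _ (fun i => Impression.time i) 2
        (fun x hx => by obtain ⟨j, _, _, rfl⟩ := mem_UimpsD hx; rfl),
      pairwise_const_time _ (fun i => Impression.time i) 3
        (fun x hx => by rw [List.mem_singleton.1 hx]; rfl), ?_⟩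
    intro x hx y hy
    obtain ⟨j, _, _, rfl⟩ := mem_UimpsD hx
    rw [List.mem_singleton.1 hy]
    show (2 : ℕ) ≤ 3
    omega
  · intro x hx y hy
    rw [List.eq_of_mem_replicate hx]
    rcases List.mem_append.1 hy with hy | hy
    · obtain ⟨j, _, _, rfl⟩ := mem_UimpsD hy
      show (1 : ℕ) ≤ 2
      omega
    · rw [List.mem_singleton.1 hy]
      show (1 : ℕ) ≤ 3
      omega

end AuxCorA11h
section AuxCorA11i

lemma zip_pair_list (l : List Impression) (n : ℕ) (hn : l.length = n) (b : ℝ) :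
    l.zip (List.replicate n b) = l.map fun x => (x, b) := by
  subst hn
  exact zip_replicate l b

lemma ush_masterD (k : ℕ) (hk : 1 ≤ k) :
    ∀ j, j < k → ∀ i, i < 5 * k →
      postAttr USH sfun 1 ⟨UimpsD k, convsL (5 * k)⟩ (Xi (2 + j), Ci i)
        = (0.2 : ℝ) / ((k : ℕ) : ℝ) := by
  have hk0 : (0 : ℝ) < (k : ℝ) := by exact_mod_cast hk
  refine postAttr_master USH _ 2 k (5 * k) _ rfl (by positivity) ?_ ?_
  · rw [show (((5 * k : ℕ) : ℝ)) * ((0.2 : ℝ) / ((k : ℕ) : ℝ)) = 1 from by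
      push_cast; field_simp; ring]
  · intro i hi
    have hel : eligible ⟨UimpsD k, convsL (5 * k)⟩ (Ci i) = UimpsD k := by
      refine eligible_all _ (fun x hx => ?_) i
      obtain ⟨j, _, _, rfl⟩ := mem_UimpsD hx
      exact ⟨by norm_num [Xi], rfl, rfl⟩
    refine ⟨[(Xi 1, (0.4 : ℝ))], [(Xi (k + 2), (0.4 : ℝ))], ?_, ?_, ?_⟩
    · intro p hp
      rw [List.mem_singleton.1 hp]
      rintro ⟨-, -, h2, -⟩
      exact absurd h2 (by norm_num [Xi, sfun])
    · intro p hp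
      rw [List.mem_singleton.1 hp]
      rintro ⟨-, -, -, h2⟩
      revert h2
      show ¬ (k + 2 < 2 + k)
      omega
    · rw [hel, ush_eq _ _ (by rw [len_UimpsD]; omega), len_UimpsD]
      have hc : (((k + 2 : ℕ) : ℝ)) - 2 = ((k : ℕ) : ℝ) := by push_cast; ring
      rw [hc, show k + 2 - 2 = k from by omega]
      rw [UimpsD, List.zip_cons_cons,
        List.zip_append (by rw [List.length_map, List.length_range, List.length_replicate]),
        zip_pair_list _ k (by rw [List.length_map, List.length_range]) _,
        List.map_map]
      show _ = [(Xi 1, (0.4:ℝ))] ++ (_ ++ [(Xi (k+2), (0.4:ℝ))])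
      simp [Function.comp]

lemma ush_masterD' (k : ℕ) (hk : 1 ≤ k) :
    ∀ j, j < k → ∀ i, i < 5 * k →
      postAttr USH sfun 1 ⟨ushImpsD' k, convsL (5 * k)⟩ (Xi (2 + j), Ci i)
        = (0.2 : ℝ) / (2 * ((k : ℕ) : ℝ) + 2) := by
  have hk0 : (0 : ℝ) < (k : ℝ) := by exact_mod_cast hk
  refine postAttr_master USH _ 2 k (5 * k) _ rfl (by positivity) ?_ ?_
  · have h1 : (((5 * k : ℕ) : ℝ)) * ((0.2 : ℝ) / (2 * ((k : ℕ) : ℝ) + 2))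
        = (k : ℝ) / (2 * (k : ℝ) + 2) := by
      push_cast; field_simp; ring
    rw [h1, div_le_one (by positivity)]
    linarith
  · intro i hi
    have hel : eligible ⟨ushImpsD' k, convsL (5 * k)⟩ (Ci i) = ushImpsD' k := by
      refine eligible_all _ (fun x hx => ?_) i
      rw [ushImpsD'] at hx
      rcases List.mem_append.1 hx with hx | hx
      · rw [List.eq_of_mem_replicate hx]
        exact ⟨by norm_num [v0], rfl, rfl⟩
      · rcases List.mem_append.1 hx with hx | hx
        · obtain ⟨j, _, _, rfl⟩ := mem_UimpsD hx
          exact ⟨by norm_num [Xi], rfl, rfl⟩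
        · rw [List.mem_singleton.1 hx]
          exact ⟨by norm_num [vl], rfl, rfl⟩
    set e : ℝ := (0.2 : ℝ) / (2 * ((k : ℕ) : ℝ) + 2) with he
    refine ⟨(v0, (0.4 : ℝ)) :: (List.replicate k (v0, e) ++ [(Xi 1, e)]),
      [(Xi (k + 2), e), (vl, (0.4 : ℝ))], ?_, ?_, ?_⟩
    · rintro p hp
      rcases List.mem_cons.1 hp with rfl | hp
      · rintro ⟨-, -, h2, -⟩
        exact absurd h2 (by norm_num [v0, sfun])
      rcases List.mem_append.1 hp with hp | hp
      · rw [List.eq_of_mem_replicate hp]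
        rintro ⟨-, -, h2, -⟩
        exact absurd h2 (by norm_num [v0, sfun])
      · rw [List.mem_singleton.1 hp]
        rintro ⟨-, -, h2, -⟩
        exact absurd h2 (by norm_num [Xi, sfun])
    · rintro p hp
      rcases List.mem_cons.1 hp with rfl | hp
      · rintro ⟨-, -, -, h2⟩
        revert h2
        show ¬ (k + 2 < 2 + k)
        omega
      · rw [List.mem_singleton.1 hp]
        rintro ⟨-, -, h2, -⟩
        exact absurd h2 (by norm_num [vl, sfun])
    · have hlen : (ushImpsD' k).length = (2 * k + 2) + 2 := by
        rw [ushImpsD', List.length_append, List.length_append, List.length_replicate,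
          len_UimpsD]
        simp
        omega
      rw [hel, ush_eq _ _ (by rw [hlen]; omega), hlen]
      have hc : ((((2 * k + 2) + 2 : ℕ) : ℝ)) - 2 = 2 * ((k : ℕ) : ℝ) + 2 := by push_cast; ring
      rw [hc, show (2 * k + 2) + 2 - 2 = k + (k + 2) from by omega, ← he]
      rw [show ushImpsD' k = v0 :: ((List.replicate k v0 ++ (UimpsD k ++ [vl]))) from by
        rw [ushImpsD', List.replicate_succ, List.cons_append]]
      rw [List.replicate_add, List.append_assoc, List.zip_cons_cons,
        List.zip_append (by simp),
        zip_pair_list (List.replicate k v0) k (by simp) _,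
        List.zip_append (by rw [len_UimpsD, List.length_replicate]),
        zip_pair_list _ (k + 2) (len_UimpsD k) _]
      rw [UimpsD, List.map_cons, List.map_append, List.map_map]
      show _ = ((v0, (0.4:ℝ)) :: (List.replicate k (v0, e) ++ [(Xi 1, e)])) ++ (_ ++ [(Xi (k+2), e), (vl, (0.4:ℝ))])
      simp [Function.comp, List.map_replicate]

end AuxCorA11i
section AuxCorA11j

lemma ush_invalid : ∀ C₀ : ℝ, 0 < C₀ → ∃ (D D' : Dataset) (v : ℕ × ℕ × ℕ),
    RemovesScope (fun i => (i.user, i.pub, i.adv)) (fun _ => none) v D D' ∧ SortedDS D' ∧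
    C₀ < l1dist (postAttr USH (fun i => (i.user, i.pub, i.adv)) 1 D)
      (postAttr USH (fun i => (i.user, i.pub, i.adv)) 1 D') := by
  intro C₀ hC₀
  obtain ⟨k, hk1, hkC⟩ : ∃ k : ℕ, 1 ≤ k ∧ 2 * C₀ < (k : ℝ) :=
    ⟨⌈2 * C₀⌉₊ + 1, Nat.le_add_left 1 _, by
      calc 2 * C₀ ≤ (⌈2 * C₀⌉₊ : ℝ) := Nat.le_ceil _
        _ < _ := by exact_mod_cast Nat.lt_succ_self _⟩
  have hk0 : (0 : ℝ) < (k : ℝ) := by exact_mod_cast hk1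
  have h2k : (0 : ℝ) < 2 * (k : ℝ) + 2 := by positivity
  refine ⟨⟨UimpsD k, convsL (5 * k)⟩, ⟨ushImpsD' k, convsL (5 * k)⟩, (0, 0, 0),
    ⟨?_, convs_filter (5 * k) _⟩, ⟨sorted_imps_ush k, sorted_convsL (5 * k)⟩, ?_⟩
  · show UimpsD k = _
    rw [ushImpsD', List.filter_append, List.filter_append, filter_scope_v0,
      filter_scope_UimpsD, filter_scope_vl, List.nil_append, List.append_nil]
  · have hF := ush_masterD k hk1
    have hF' := ush_masterD' k hk1
    have hdist := l1dist_lower _ _ 2 k (5 * k) _ _ hF hF'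
    refine lt_of_lt_of_le ?_ hdist
    have hgap : (0 : ℝ) < (0.2 : ℝ) / ((k : ℕ) : ℝ) - (0.2 : ℝ) / (2 * ((k : ℕ) : ℝ) + 2) := by
      rw [sub_pos, div_lt_div_iff₀ h2k hk0]
      nlinarith
    rw [abs_of_pos hgap]
    have heq : (k : ℝ) * ((5 * k : ℕ) : ℝ) *
        ((0.2 : ℝ) / ((k : ℕ) : ℝ) - (0.2 : ℝ) / (2 * ((k : ℕ) : ℝ) + 2))
        = (k : ℝ) * ((k : ℝ) + 2) / (2 * (k : ℝ) + 2) := by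
      push_cast
      field_simp
      ring
    rw [heq, lt_div_iff₀ h2k]
    nlinarith [mul_lt_mul_of_pos_right hkC hk0]

end AuxCorA11j
section AuxCorA11k

noncomputable def wA (th : ℝ) : ℝ := (2 : ℝ) ^ (-((3 : ℝ) / th))
noncomputable def wB (th : ℝ) : ℝ := (2 : ℝ) ^ (-((2 : ℝ) / th))

lemma wA_pos (th : ℝ) : 0 < wA th := Real.rpow_pos_of_pos (by norm_num) _
lemma wB_pos (th : ℝ) : 0 < wB th := Real.rpow_pos_of_pos (by norm_num) _

lemma sum_map_const {α : Type} (l : List α) (b : ℝ) :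
    (l.map (fun _ => b)).sum = l.length * b := by
  induction l with
  | nil => simp
  | cons x l ih => simp [ih]; ring

lemma expr_wt_v0 (th : ℝ) (i : ℕ) :
    (2 : ℝ) ^ (-(((((Ci i).time : ℕ) : ℝ) - ((v0.time : ℕ) : ℝ)) / th)) = wA th := by
  norm_num [Ci, v0, wA]

lemma expr_wt_Xi (th : ℝ) (i j : ℕ) :
    (2 : ℝ) ^ (-(((((Ci i).time : ℕ) : ℝ) - (((Xi j).time : ℕ) : ℝ)) / th)) = wB th := by
  norm_num [Ci, Xi, wB]

lemma expr_weights (th : ℝ) (q m : ℕ) (i : ℕ) :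
    EXPR th (List.replicate q v0 ++ XimpsL m) (Ci i)
      = (List.replicate q v0 ++ XimpsL m).map
          (fun x => (2 : ℝ) ^ (-((((Ci i).time : ℝ) - (x.time : ℝ)) / th))
            / ((q : ℝ) * wA th + (m : ℝ) * wB th)) := by
  show (List.replicate q v0 ++ XimpsL m).map _ = _
  have hsum : ((List.replicate q v0 ++ XimpsL m).map
      (fun x : Impression => (2 : ℝ) ^ (-((((Ci i).time : ℝ) - (x.time : ℝ)) / th)))).sum
      = (q : ℝ) * wA th + (m : ℝ) * wB th := by
    rw [List.map_append, List.sum_append, List.map_replicate, expr_wt_v0,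
      List.sum_replicate, nsmul_eq_mul]
    congr 1
    rw [XimpsL, List.map_map]
    rw [List.map_congr_left (fun j _ => by
      simp only [Function.comp_apply]
      exact expr_wt_Xi th i (1 + j))]
    rw [sum_map_const, List.length_range]
  rw [hsum]

lemma expr_masterD' (th : ℝ) (q m : ℕ) (hm : 1 ≤ m) :
    ∀ j, j < m → ∀ i, i < m →
      postAttr (EXPR th) sfun 1 ⟨List.replicate q v0 ++ XimpsL m, convsL m⟩ (Xi (1 + j), Ci i)
        = wB th / ((q : ℝ) * wA th + (m : ℝ) * wB th) := by
  have hm0 : (0 : ℝ) < (m : ℝ) := by exact_mod_cast hm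
  have hS : (0 : ℝ) < (q : ℝ) * wA th + (m : ℝ) * wB th := by
    have h1 : (0 : ℝ) ≤ (q : ℝ) * wA th := mul_nonneg (Nat.cast_nonneg q) (le_of_lt (wA_pos th))
    nlinarith [wB_pos th]
  refine postAttr_master (EXPR th) _ 1 m m _ rfl
    (le_of_lt (div_pos (wB_pos th) hS)) ?_ ?_
  · rw [show (m : ℝ) * (wB th / ((q : ℝ) * wA th + (m : ℝ) * wB th))
      = ((m : ℝ) * wB th) / ((q : ℝ) * wA th + (m : ℝ) * wB th) from by ring]
    rw [div_le_one hS]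
    nlinarith [wA_pos th]
  · intro i hi
    refine ⟨List.replicate q (v0, wA th / ((q : ℝ) * wA th + (m : ℝ) * wB th)), [], ?_,
      by simp, ?_⟩
    · intro p hp
      rw [List.eq_of_mem_replicate hp]
      exact v0_not_tracked m
    · rw [eligible_uni m q i, expr_weights, zip_self_map, List.append_nil, List.map_append,
        List.map_replicate]
      congr 1
      · rw [show ((2 : ℝ) ^ (-((((Ci i).time : ℝ) - ((v0.time : ℕ) : ℝ)) / th))) = wA th
          from expr_wt_v0 th i]
      · rw [XimpsL, List.map_map]
        refine List.map_congr_left fun j _ => ?_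
        simp only [Function.comp_apply]
        rw [show ((2 : ℝ) ^ (-((((Ci i).time : ℝ) - (((Xi (1+j)).time : ℕ) : ℝ)) / th))) = wB th
          from expr_wt_Xi th i (1 + j)]

lemma expr_masterD (th : ℝ) (m : ℕ) (hm : 1 ≤ m) :
    ∀ j, j < m → ∀ i, i < m →
      postAttr (EXPR th) sfun 1 ⟨XimpsL m, convsL m⟩ (Xi (1 + j), Ci i) = ((m : ℝ))⁻¹ := by
  have hm0 : (0 : ℝ) < (m : ℝ) := by exact_mod_cast hm
  refine postAttr_master (EXPR th) _ 1 m m _ rfl (by positivity) (by field_simp; norm_num) ?_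
  intro i hi
  have hel : eligible ⟨XimpsL m, convsL m⟩ (Ci i) = XimpsL m := by
    refine eligible_all _ (fun x hx => ?_) i
    obtain ⟨j, _, rfl⟩ := mem_XimpsL hx
    exact ⟨by norm_num [Xi], rfl, rfl⟩
  refine ⟨[], [], by simp, by simp, ?_⟩
  rw [hel, List.nil_append, List.append_nil]
  have hw : EXPR th (XimpsL m) (Ci i) = (XimpsL m).map (fun _ => ((m : ℝ))⁻¹) := by
    show (XimpsL m).map _ = _
    have hsum : ((XimpsL m).map
        (fun x : Impression => (2 : ℝ) ^ (-((((Ci i).time : ℝ) - (x.time : ℝ)) / th)))).sum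
        = (m : ℝ) * wB th := by
      rw [XimpsL, List.map_map]
      rw [List.map_congr_left (fun j _ => by
        simp only [Function.comp_apply]
        exact expr_wt_Xi th i (1 + j))]
      rw [sum_map_const, List.length_range]
    rw [hsum]
    refine List.map_congr_left fun x hx => ?_
    obtain ⟨j, _, rfl⟩ := mem_XimpsL hx
    show (2 : ℝ) ^ (-((((Ci i).time : ℝ) - (((Xi (1+j)).time : ℕ) : ℝ)) / th))
        / ((m : ℝ) * wB th) = ((m : ℝ))⁻¹
    rw [expr_wt_Xi th i (1 + j)]
    rw [show (m : ℝ) * wB th = wB th * (m : ℝ) from mul_comm _ _, div_mul_eq_div_div,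
      div_self (ne_of_gt (wB_pos th)), one_div]
  rw [hw, zip_self_map, XimpsL, List.map_map]
  refine List.map_congr_left fun j _ => rfl

end AuxCorA11k
section AuxCorA11l

lemma expr_invalid : ∀ th : ℝ, 0 < th → ∀ C₀ : ℝ, 0 < C₀ →
    ∃ (D D' : Dataset) (v : ℕ × ℕ × ℕ),
    RemovesScope (fun i => (i.user, i.pub, i.adv)) (fun _ => none) v D D' ∧ SortedDS D' ∧
    C₀ < l1dist (postAttr (EXPR th) (fun i => (i.user, i.pub, i.adv)) 1 D)
      (postAttr (EXPR th) (fun i => (i.user, i.pub, i.adv)) 1 D') := by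
  intro th hth C₀ hC₀
  obtain ⟨m, hm1, hmC⟩ : ∃ m : ℕ, 1 ≤ m ∧ 2 * C₀ < (m : ℝ) :=
    ⟨⌈2 * C₀⌉₊ + 1, Nat.le_add_left 1 _, by
      calc 2 * C₀ ≤ (⌈2 * C₀⌉₊ : ℝ) := Nat.le_ceil _
        _ < _ := by exact_mod_cast Nat.lt_succ_self _⟩
  have hm0 : (0 : ℝ) < (m : ℝ) := by exact_mod_cast hm1
  set K : ℕ := ⌈(2 : ℝ) ^ ((1 : ℝ) / th)⌉₊ with hK
  set q : ℕ := 2 * m * K with hq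
  have hKge : (2 : ℝ) ^ ((1 : ℝ) / th) ≤ (K : ℝ) := Nat.le_ceil _
  have hrpos : (0 : ℝ) < (2 : ℝ) ^ ((1 : ℝ) / th) := Real.rpow_pos_of_pos (by norm_num) _
  have hKB : (2 : ℝ) ^ ((1 : ℝ) / th) * wA th = wB th := by
    rw [wA, wB, ← Real.rpow_add (by norm_num : (0 : ℝ) < 2)]
    congr 1
    ring
  have hqwA : 2 * (m : ℝ) * wB th ≤ (q : ℝ) * wA th := by
    have hqcast : ((q : ℕ) : ℝ) = 2 * (m : ℝ) * (K : ℝ) := by rw [hq]; push_cast; ring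
    rw [hqcast, ← hKB]
    have := mul_le_mul_of_nonneg_right hKge (le_of_lt (wA_pos th))
    nlinarith
  have hS : (0 : ℝ) < (q : ℝ) * wA th + (m : ℝ) * wB th := by
    have h1 : (0 : ℝ) ≤ (q : ℝ) * wA th := mul_nonneg (Nat.cast_nonneg q) (le_of_lt (wA_pos th))
    nlinarith [wB_pos th]
  refine ⟨⟨XimpsL m, convsL m⟩, ⟨List.replicate q v0 ++ XimpsL m, convsL m⟩, (0, 0, 0),
    ⟨?_, convs_filter m _⟩, ⟨sorted_imps_uni m q, sorted_convsL m⟩, ?_⟩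
  · show XimpsL m = _
    rw [List.filter_append, filter_scope_v0, filter_scope_XimpsL, List.nil_append]
  · have hF := expr_masterD th m hm1
    have hF' := expr_masterD' th q m hm1
    have hdist := l1dist_lower _ _ 1 m m _ _ hF hF'
    refine lt_of_lt_of_le ?_ hdist
    have hmwB : (0 : ℝ) ≤ (m : ℝ) * wB th := mul_nonneg (Nat.cast_nonneg m) (le_of_lt (wB_pos th))
    have hw'le : wB th / ((q : ℝ) * wA th + (m : ℝ) * wB th) ≤ 1 / (2 * (m : ℝ)) := by
      rw [div_le_div_iff₀ hS (by positivity)]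
      nlinarith
    have hinv : ((m : ℝ))⁻¹ - 1 / (2 * (m : ℝ)) = 1 / (2 * (m : ℝ)) := by
      field_simp
      ring
    have hgap : 1 / (2 * (m : ℝ)) ≤ ((m : ℝ))⁻¹ - wB th / ((q : ℝ) * wA th + (m : ℝ) * wB th) := by
      linarith
    have habs : |((m : ℝ))⁻¹ - wB th / ((q : ℝ) * wA th + (m : ℝ) * wB th)|
        = ((m : ℝ))⁻¹ - wB th / ((q : ℝ) * wA th + (m : ℝ) * wB th) := by
      rw [abs_of_pos]
      have : (0 : ℝ) < 1 / (2 * (m : ℝ)) := by positivity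
      linarith
    rw [habs]
    calc C₀ < (m : ℝ) / 2 := by linarith
      _ = (m : ℝ) * (m : ℝ) * (1 / (2 * (m : ℝ))) := by field_simp
      _ ≤ (m : ℝ) * (m : ℝ) *
          (((m : ℝ))⁻¹ - wB th / ((q : ℝ) * wA th + (m : ℝ) * wB th)) := by
        refine mul_le_mul_of_nonneg_left hgap (by positivity)

end AuxCorA11l
/-- Corollary A.11: for uniform, exponential time decay, and U-shaped attribution, the
user × publisher × advertiser adjacency relation with post-attribution enforcement is
invalid: with bound `r = 1`, for every constant `C₀ > 0` there are adjacent datasets whose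
attributed datasets are at ℓ₁-distance greater than `C₀`. -/
theorem post_attr_upa_uni_exp_ushaped_invalid :
    (∀ C₀ : ℝ, 0 < C₀ → ∃ (D D' : Dataset) (v : ℕ × ℕ × ℕ),
      RemovesScope (fun i => (i.user, i.pub, i.adv)) (fun _ => none) v D D' ∧ SortedDS D' ∧
      C₀ < l1dist (postAttr UNI (fun i => (i.user, i.pub, i.adv)) 1 D)
        (postAttr UNI (fun i => (i.user, i.pub, i.adv)) 1 D')) ∧
    (∀ th : ℝ, 0 < th → ∀ C₀ : ℝ, 0 < C₀ → ∃ (D D' : Dataset) (v : ℕ × ℕ × ℕ),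
      RemovesScope (fun i => (i.user, i.pub, i.adv)) (fun _ => none) v D D' ∧ SortedDS D' ∧
      C₀ < l1dist (postAttr (EXPR th) (fun i => (i.user, i.pub, i.adv)) 1 D)
        (postAttr (EXPR th) (fun i => (i.user, i.pub, i.adv)) 1 D')) ∧
    (∀ C₀ : ℝ, 0 < C₀ → ∃ (D D' : Dataset) (v : ℕ × ℕ × ℕ),
      RemovesScope (fun i => (i.user, i.pub, i.adv)) (fun _ => none) v D D' ∧ SortedDS D' ∧
      C₀ < l1dist (postAttr USH (fun i => (i.user, i.pub, i.adv)) 1 D)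
        (postAttr USH (fun i => (i.user, i.pub, i.adv)) 1 D')) := by
  exact ⟨uni_invalid, expr_invalid, ush_invalid⟩
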